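/- With φ_T as defined (φ_T(M₁,M₂,n) = -∑_{d squarefree, d>1, prime factors ≤ n} μ(d)·⌊((M₁ mod d)+(M₂ mod d))/d⌋), for every natural number n ≥ 2: φ_T(n², 2n, n) = π(2n) - π(n) + 1 - (π(n²+2n) - π(n²)). -/

import Mathlib

open ArithmeticFunction Nat Finset

/-- Index set: squarefree `d > 1` all of whose prime factors are `≤ n`. -/
def sqfSet (n : ℕ) : Finset ℕ :=
  (Finset.range (primorial n + 1)).filter
    (fun d => 1 < d ∧ Squarefree d ∧ ∀ p ∈ d.primeFactors, p ≤ n)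

/-- The transformed Legendre function `φ_T`. -/
def phiT (M₁ M₂ n : ℕ) : ℤ :=
  -∑ d ∈ sqfSet n, ArithmeticFunction.moebius d * (((M₁ % d + M₂ % d) / d : ℕ) : ℤ)

open scoped ArithmeticFunction.Moebius

lemma squarefree_prod_primes {s : Finset ℕ} (hs : ∀ p ∈ s, p.Prime) :
    Squarefree (∏ p ∈ s, p) := by
  classical
  induction s using Finset.induction_on with
  | empty => simpa using squarefree_one
  | @insert a s h ih =>
    rw [Finset.prod_insert h]
    have ha : a.Prime := hs a (Finset.mem_insert_self a s)
    have hs' : ∀ p ∈ s, p.Prime := fun p hp => hs p (Finset.mem_insert_of_mem hp)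
    have hcop : Nat.Coprime a (∏ p ∈ s, p) := by
      rw [ha.coprime_iff_not_dvd]
      intro hdvd
      obtain ⟨q, hq, haq⟩ := (ha.prime.dvd_finset_prod_iff _).mp hdvd
      exact h (((hs' q hq).dvd_iff_eq ha.ne_one).mp haq ▸ hq)
    exact (Nat.squarefree_mul hcop).mpr ⟨ha.squarefree, ih hs'⟩

lemma squarefree_primorial' (n : ℕ) : Squarefree (primorial n) :=
  squarefree_prod_primes fun p hp => (Finset.mem_filter.mp hp).2

lemma prime_dvd_primorial_iff {n p : ℕ} (hp : p.Prime) :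
    p ∣ primorial n ↔ p ≤ n := by
  rw [primorial, hp.prime.dvd_finset_prod_iff]
  constructor
  · rintro ⟨q, hq, hpq⟩
    rw [Finset.mem_filter, Finset.mem_range] at hq
    have := (hq.2.dvd_iff_eq hp.ne_one).mp hpq
    omega
  · intro hpn
    exact ⟨p, Finset.mem_filter.mpr ⟨Finset.mem_range.mpr (by omega), hp⟩, dvd_rfl⟩

lemma dvd_primorial_iff {n d : ℕ} :
    d ∣ primorial n ↔ Squarefree d ∧ ∀ p ∈ d.primeFactors, p ≤ n := by
  constructor
  · intro hd
    refine ⟨(squarefree_primorial n).squarefree_of_dvd hd, fun p hp => ?_⟩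
    have hpp := Nat.prime_of_mem_primeFactors hp
    exact (prime_dvd_primorial_iff hpp).mp ((Nat.dvd_of_mem_primeFactors hp).trans hd)
  · rintro ⟨hsq, hle⟩
    have h1 : d = ∏ p ∈ d.primeFactors, p := (Nat.prod_primeFactors_of_squarefree hsq).symm
    rw [h1, primorial]
    refine Finset.prod_dvd_prod_of_subset _ _ _ (fun p hp => ?_)
    rw [Finset.mem_filter, Finset.mem_range]
    exact ⟨by have := hle p hp; omega, Nat.prime_of_mem_primeFactors hp⟩

lemma sqfSet_eq (n : ℕ) : sqfSet n = (primorial n).divisors.erase 1 := by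
  ext d
  rw [sqfSet, Finset.mem_filter, Finset.mem_range, Finset.mem_erase, Nat.mem_divisors,
    dvd_primorial_iff]
  constructor
  · rintro ⟨_, h1, hsq, hle⟩
    exact ⟨by omega, ⟨hsq, hle⟩, (primorial_pos n).ne'⟩
  · rintro ⟨h1, ⟨hsq, hle⟩, _⟩
    have hd : d ∣ primorial n := dvd_primorial_iff.mpr ⟨hsq, hle⟩
    have := Nat.le_of_dvd (primorial_pos n) hd
    have hd0 : d ≠ 0 := hsq.ne_zero
    exact ⟨by omega, by omega, hsq, hle⟩

lemma moebius_sum_divisors (m : ℕ) :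
    ∑ d ∈ m.divisors, (μ d : ℤ) = if m = 1 then 1 else 0 := by
  rw [← coe_mul_zeta_apply, moebius_mul_coe_zeta, one_apply]

lemma legendre_sum (P x : ℕ) (hP : P ≠ 0) :
    ∑ d ∈ P.divisors, (μ d : ℤ) * ((x / d : ℕ) : ℤ) =
      ((Finset.Ioc 0 x).filter fun m => Nat.Coprime m P).card := by
  classical
  have key : ∀ d ∈ P.divisors, (μ d : ℤ) * ((x / d : ℕ) : ℤ) =
      ∑ m ∈ Finset.Ioc 0 x, if d ∣ m then (μ d : ℤ) else 0 := by
    intro d _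
    rw [← Nat.Ioc_filter_dvd_card_eq_div x d, ← Finset.sum_filter,
      Finset.sum_const, nsmul_eq_mul, mul_comm]
  rw [Finset.sum_congr rfl key, Finset.sum_comm]
  have inner : ∀ m ∈ Finset.Ioc 0 x,
      (∑ d ∈ P.divisors, if d ∣ m then (μ d : ℤ) else 0) =
        if Nat.Coprime m P then 1 else 0 := by
    intro m _
    rw [← Finset.sum_filter]
    have hset : P.divisors.filter (· ∣ m) = (Nat.gcd m P).divisors := by
      ext e
      simp only [Finset.mem_filter, Nat.mem_divisors, Nat.dvd_gcd_iff]
      constructor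
      · rintro ⟨⟨heP, _⟩, hem⟩
        exact ⟨⟨hem, heP⟩, Nat.gcd_ne_zero_right hP⟩
      · rintro ⟨⟨hem, heP⟩, _⟩
        exact ⟨⟨heP, hP⟩, hem⟩
    rw [hset, moebius_sum_divisors]
  rw [Finset.sum_congr rfl inner, ← Finset.sum_filter, Finset.sum_const,
    nsmul_eq_mul, mul_one]

open scoped Nat.Prime

lemma pi_add {n x : ℕ} (h : n ≤ x) :
    π x = π n + ((Finset.Ioc n x).filter Nat.Prime).card := by
  have hsplit : Finset.range (x + 1) = Finset.range (n + 1) ∪ Finset.Ioc n x := by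
    ext a
    simp only [Finset.mem_range, Finset.mem_union, Finset.mem_Ioc]
    omega
  have hdisj : Disjoint ((Finset.range (n + 1)).filter Nat.Prime)
      ((Finset.Ioc n x).filter Nat.Prime) := by
    refine Finset.disjoint_filter_filter ?_
    rw [Finset.disjoint_left]
    intro a ha hb
    simp only [Finset.mem_range] at ha
    simp only [Finset.mem_Ioc] at hb
    omega
  rw [Nat.primeCounting, Nat.primeCounting, ← Nat.primesBelow_card_eq_primeCounting',
    ← Nat.primesBelow_card_eq_primeCounting', Nat.primesBelow, Nat.primesBelow, hsplit,
    Finset.filter_union, Finset.card_union_of_disjoint hdisj]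

lemma coprime_primorial_iff {m n : ℕ} (hm : m ≠ 0) :
    Nat.Coprime m (primorial n) ↔ ∀ p, p.Prime → p ∣ m → n < p := by
  constructor
  · intro hcop p hp hpm
    by_contra hle
    have hpP : p ∣ primorial n := (prime_dvd_primorial_iff hp).mpr (by omega)
    have : p ∣ 1 := hcop ▸ Nat.dvd_gcd hpm hpP
    exact hp.one_lt.ne' (Nat.dvd_one.mp this)
  · intro hall
    by_contra hnc
    have hg : Nat.gcd m (primorial n) ≠ 1 := hnc
    have hg0 : Nat.gcd m (primorial n) ≠ 0 := Nat.gcd_ne_zero_left hm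
    have hp := Nat.minFac_prime hg
    have hpm : (Nat.gcd m (primorial n)).minFac ∣ m :=
      (Nat.minFac_dvd _).trans (Nat.gcd_dvd_left _ _)
    have hpP : (Nat.gcd m (primorial n)).minFac ∣ primorial n :=
      (Nat.minFac_dvd _).trans (Nat.gcd_dvd_right _ _)
    have := (prime_dvd_primorial_iff hp).mp hpP
    have := hall _ hp hpm
    omega

lemma filter_coprime_eq {n x : ℕ} (hn : 2 ≤ n) (hx1 : n ≤ x) (hx2 : x < (n + 1) ^ 2) :
    (Finset.Ioc 0 x).filter (fun m => Nat.Coprime m (primorial n)) =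
      insert 1 ((Finset.Ioc n x).filter Nat.Prime) := by
  ext m
  simp only [Finset.mem_filter, Finset.mem_Ioc, Finset.mem_insert]
  constructor
  · rintro ⟨⟨hm0, hmx⟩, hcop⟩
    by_cases hm1 : m = 1
    · exact Or.inl hm1
    right
    have hm0' : m ≠ 0 := by omega
    have hall := (coprime_primorial_iff hm0').mp hcop
    have hp := Nat.minFac_prime hm1
    set p := m.minFac with hpdef
    have hpm : p ∣ m := Nat.minFac_dvd m
    have hpn : n < p := hall p hp hpm
    obtain ⟨k, hk⟩ := hpm
    have hk0 : k ≠ 0 := by rintro rfl; simp at hk; omega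
    by_cases hk1 : k = 1
    · subst hk1
      rw [Nat.mul_one] at hk
      exact ⟨⟨by omega, hmx⟩, hk ▸ hp⟩
    · exfalso
      have hq := Nat.minFac_prime hk1
      have hqk : k.minFac ∣ k := Nat.minFac_dvd k
      have hqm : k.minFac ∣ m := hk ▸ hqk.mul_left p
      have hqn : n < k.minFac := hall _ hq hqm
      have hkq : k.minFac ≤ k := Nat.le_of_dvd (by omega) hqk
      have : (n + 1) * (n + 1) ≤ p * k :=
        Nat.mul_le_mul (by omega) (by omega)
      rw [← hk] at this
      have : (n + 1) ^ 2 ≤ m := by nlinarith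
      omega
  · rintro (rfl | ⟨⟨hnm, hmx⟩, hp⟩)
    · exact ⟨⟨one_pos, by omega⟩, Nat.coprime_one_left _⟩
    · refine ⟨⟨by omega, hmx⟩, (coprime_primorial_iff hp.ne_zero).mpr ?_⟩
      intro q hq hqm
      rwa [(Nat.prime_dvd_prime_iff_eq hq hp).mp hqm]

lemma count_coprime {n x : ℕ} (hn : 2 ≤ n) (hx1 : n ≤ x) (hx2 : x < (n + 1) ^ 2) :
    (((Finset.Ioc 0 x).filter fun m => Nat.Coprime m (primorial n)).card : ℤ) =
      1 + (π x : ℤ) - π n := by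
  rw [filter_coprime_eq hn hx1 hx2, Finset.card_insert_of_notMem (by simp [Nat.not_prime_one]),
    pi_add hx1]
  push_cast
  ring

lemma nat_add_div_eq (M₁ M₂ d : ℕ) (hd : 0 < d) :
    (M₁ + M₂) / d = M₁ / d + M₂ / d + (M₁ % d + M₂ % d) / d := by
  conv_lhs => rw [← Nat.div_add_mod M₁ d, ← Nat.div_add_mod M₂ d]
  rw [show d * (M₁ / d) + M₁ % d + (d * (M₂ / d) + M₂ % d) =
      M₁ % d + M₂ % d + (M₁ / d + M₂ / d) * d by ring,
    Nat.add_mul_div_right _ _ hd]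
  ring

lemma phiT_eq (M₁ M₂ n : ℕ) :
    phiT M₁ M₂ n =
      (((Finset.Ioc 0 M₁).filter fun m => Nat.Coprime m (primorial n)).card : ℤ) +
      (((Finset.Ioc 0 M₂).filter fun m => Nat.Coprime m (primorial n)).card : ℤ) -
      (((Finset.Ioc 0 (M₁ + M₂)).filter fun m => Nat.Coprime m (primorial n)).card : ℤ) := by
  have hP : primorial n ≠ 0 := (primorial_pos n).ne'
  have h1 : (1 : ℕ) ∈ (primorial n).divisors := Nat.one_mem_divisors.mpr hP
  have herase : ∀ f : ℕ → ℤ, f 1 = 0 →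
      ∑ d ∈ (primorial n).divisors.erase 1, f d = ∑ d ∈ (primorial n).divisors, f d := by
    intro f hf
    rw [← Finset.add_sum_erase _ f h1, hf, zero_add]
  rw [phiT, sqfSet_eq, herase _ (by simp)]
  have hsplit : ∀ d ∈ (primorial n).divisors,
      (μ d : ℤ) * (((M₁ % d + M₂ % d) / d : ℕ) : ℤ) =
        (μ d : ℤ) * (((M₁ + M₂) / d : ℕ) : ℤ) - (μ d : ℤ) * ((M₁ / d : ℕ) : ℤ) -
          (μ d : ℤ) * ((M₂ / d : ℕ) : ℤ) := by
    intro d hd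
    have hd0 : 0 < d := Nat.pos_of_mem_divisors hd
    have := nat_add_div_eq M₁ M₂ d hd0
    have hcast : (((M₁ + M₂) / d : ℕ) : ℤ) =
        ((M₁ / d : ℕ) : ℤ) + ((M₂ / d : ℕ) : ℤ) + (((M₁ % d + M₂ % d) / d : ℕ) : ℤ) := by
      exact_mod_cast congrArg (fun x : ℕ => (x : ℤ)) this
    rw [show (((M₁ % d + M₂ % d) / d : ℕ) : ℤ) =
        (((M₁ + M₂) / d : ℕ) : ℤ) - ((M₁ / d : ℕ) : ℤ) - ((M₂ / d : ℕ) : ℤ) by linarith]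
    ring
  rw [Finset.sum_congr rfl hsplit]
  rw [Finset.sum_sub_distrib, Finset.sum_sub_distrib,
    legendre_sum _ (M₁ + M₂) hP, legendre_sum _ M₁ hP, legendre_sum _ M₂ hP]
  ring

theorem stmt_11 (n : ℕ) (hn : 2 ≤ n) :
    phiT (n ^ 2) (2 * n) n =
      (Nat.primeCounting (2 * n) : ℤ) - Nat.primeCounting n + 1 -
        ((Nat.primeCounting (n ^ 2 + 2 * n) : ℤ) - Nat.primeCounting (n ^ 2)) := by
  rw [phiT_eq]
  rw [count_coprime hn (by nlinarith) (by nlinarith),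
    count_coprime hn (by omega) (by nlinarith),
    count_coprime hn (by nlinarith) (by nlinarith)]
  ring
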